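/- The set {x⁸ : x ∈ ℕ⁺} is not closed in the Golomb space; in particular, 16 lies in the closure of {x⁸ : x ∈ ℕ⁺} but 16 is not an eighth power of a positive integer. -/

import Mathlib

/-- The base of the Golomb topology: arithmetic progressions `{a + b*n : n ≥ 0}`
with coprime `a, b ≥ 1`, viewed inside the positive integers. -/
def golombBasis : Set (Set ℕ+) :=
  {S | ∃ a b : ℕ, 1 ≤ a ∧ 1 ≤ b ∧ Nat.Coprime a b ∧
    S = {x : ℕ+ | ∃ n : ℕ, (x : ℕ) = a + b * n}}

/-- The Golomb (relatively prime integer) topology on `ℕ+`. -/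
instance golombTopology : TopologicalSpace ℕ+ :=
  TopologicalSpace.generateFrom golombBasis


lemma golomb_isBasis : TopologicalSpace.IsTopologicalBasis golombBasis := by
  refine ⟨?_, ?_, rfl⟩
  · rintro t1 ⟨a1, b1, ha1, hb1, hco1, rfl⟩ t2 ⟨a2, b2, ha2, hb2, hco2, rfl⟩ x ⟨⟨n1, hn1⟩, ⟨n2, hn2⟩⟩
    set L := Nat.lcm b1 b2 with hL
    have hL1 : 1 ≤ L := Nat.lcm_pos hb1 hb2
    have hcx1 : Nat.Coprime (x : ℕ) b1 := by
      rw [hn1, Nat.coprime_add_mul_left_left]; exact hco1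
    have hcx2 : Nat.Coprime (x : ℕ) b2 := by
      rw [hn2, Nat.coprime_add_mul_left_left]; exact hco2
    have hcxL : Nat.Coprime (x : ℕ) L :=
      Nat.Coprime.coprime_dvd_right (Nat.lcm_dvd (dvd_mul_right _ _) (dvd_mul_left _ _))
        (hcx1.mul_right hcx2)
    refine ⟨{z : ℕ+ | ∃ n : ℕ, (z : ℕ) = (x : ℕ) + L * n}, ⟨(x:ℕ), L, x.one_le, hL1, hcxL, rfl⟩,
      ⟨0, by simp⟩, ?_⟩
    rintro z ⟨m, hm⟩
    obtain ⟨c1, hc1⟩ := Nat.dvd_lcm_left b1 b2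
    obtain ⟨c2, hc2⟩ := Nat.dvd_lcm_right b1 b2
    constructor
    · exact ⟨n1 + c1 * m, by rw [hm, hn1, hL, hc1]; ring⟩
    · exact ⟨n2 + c2 * m, by rw [hm, hn2, hL, hc2]; ring⟩
  · rw [Set.sUnion_eq_univ_iff]
    intro x
    refine ⟨{z : ℕ+ | ∃ n : ℕ, (z : ℕ) = 1 + 1 * n}, ⟨1, 1, le_refl 1, le_refl 1, by norm_num, rfl⟩,
      ⟨(x:ℕ) - 1, by have : 0 < (x:ℕ) := x.property; omega⟩⟩
open Polynomial

lemma not_dvd_two_pow (p : ℕ) (hp : p.Prime) (hp2 : p ≠ 2) (n : ℕ) : ¬ (p ∣ 2 ^ n) := by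
  intro h
  exact hp2 ((Nat.prime_dvd_prime_iff_eq hp Nat.prime_two).1 (hp.dvd_of_dvd_pow h))

lemma base_case (p : ℕ) [hF : Fact p.Prime] (hp2 : p ≠ 2) :
    ∃ y : ZMod p, y ^ 8 = 16 := by
  have h8 : p % 8 = 1 ∨ p % 8 = 3 ∨ p % 8 = 5 ∨ p % 8 = 7 := by
    have h : p % 2 = 1 := Nat.Prime.eq_two_or_odd hF.out |>.resolve_left hp2
    omega
  have two_case : IsSquare (2 : ZMod p) → ∃ y : ZMod p, y ^ 8 = 16 := by
    rintro ⟨s, hs⟩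
    have hs2 : s ^ 2 = 2 := by rw [sq]; exact hs.symm
    exact ⟨s, by rw [show s^8 = (s^2)^4 by ring, hs2]; norm_num⟩
  rcases h8 with h | h | h | h
  · exact two_case ((ZMod.exists_sq_eq_two_iff hp2).2 (Or.inl h))
  · obtain ⟨s, hs⟩ := (ZMod.exists_sq_eq_neg_two_iff hp2).2 (Or.inr h)
    have hs2 : s ^ 2 = -2 := by rw [sq]; exact hs.symm
    exact ⟨s, by rw [show s^8 = (s^2)^4 by ring, hs2]; norm_num⟩
  · obtain ⟨s, hs⟩ := (ZMod.exists_sq_eq_neg_one_iff (p := p)).2 (by omega)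
    have hs2 : s ^ 2 = -1 := by rw [sq]; exact hs.symm
    refine ⟨s - 1, ?_⟩
    have h2 : (s-1)^2 = -2*s := by linear_combination hs2
    have h4 : (s-1)^4 = -4 := by
      rw [show (s-1)^4 = ((s-1)^2)^2 by ring, h2]; linear_combination 4*hs2
    rw [show (s-1)^8 = ((s-1)^4)^2 by ring, h4]; norm_num
  · exact two_case ((ZMod.exists_sq_eq_two_iff hp2).2 (Or.inr h))

lemma prime_pow_case (p : ℕ) [hFp : Fact p.Prime] (hp2 : p ≠ 2) (k : ℕ) :
    ∃ x : ZMod (p ^ k), x ^ 8 = 16 := by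
  obtain ⟨y, hy⟩ := base_case p hp2
  have h16 : (16 : ZMod p) ≠ 0 := by
    intro hc
    have : ((16 : ℕ) : ZMod p) = 0 := by exact_mod_cast hc
    have := (ZMod.natCast_eq_zero_iff 16 p).1 this
    exact not_dvd_two_pow p hFp.out hp2 4 (by norm_num at this ⊢; exact this)
  have hy0 : y ≠ 0 := fun h => h16 (by rw [← hy, h]; ring)
  set a : ℤ_[p] := (y.val : ℤ_[p]) with ha
  have hnorma : ‖a‖ = 1 := by
    refine le_antisymm (PadicInt.norm_le_one a) (not_lt.1 ?_)
    rw [ha, show ((y.val : ℤ_[p])) = ((y.val : ℤ) : ℤ_[p]) by push_cast; ring,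
      PadicInt.norm_int_lt_one_iff_dvd, Int.natCast_dvd_natCast]
    intro h
    exact hy0 (by rw [← ZMod.natCast_zmod_val y, (ZMod.natCast_eq_zero_iff _ _).2 h])
  have hnorm8 : ‖(8 : ℤ_[p])‖ = 1 := by
    refine le_antisymm (PadicInt.norm_le_one _) (not_lt.1 ?_)
    rw [show ((8 : ℤ_[p])) = ((8 : ℤ) : ℤ_[p]) by push_cast; ring,
      PadicInt.norm_int_lt_one_iff_dvd]
    intro h
    have : p ∣ 8 := by exact_mod_cast h
    exact not_dvd_two_pow p hFp.out hp2 3 (by norm_num at this ⊢; exact this)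
  set F : Polynomial ℤ_[p] := X ^ 8 - C 16 with hF
  have hevala : F.eval a = a ^ 8 - 16 := by simp [hF]
  have hderiv : F.derivative.eval a = 8 * a ^ 7 := by
    simp [hF, derivative_X_pow]
    left; norm_num
  have hmem : a ^ 8 - 16 ∈ IsLocalRing.maximalIdeal ℤ_[p] := by
    rw [← PadicInt.ker_toZMod, RingHom.mem_ker]
    have hta : PadicInt.toZMod a = y := by rw [ha, map_natCast, ZMod.natCast_zmod_val]
    rw [map_sub, map_pow, hta, map_ofNat, hy, sub_self]
  have hlt : ‖F.eval a‖ < ‖F.derivative.eval a‖ ^ 2 := by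
    rw [hevala, hderiv, norm_mul, norm_pow, hnorm8, hnorma]
    rw [PadicInt.maximalIdeal_eq_span_p, Ideal.mem_span_singleton] at hmem
    rw [← PadicInt.norm_lt_one_iff_dvd] at hmem
    simpa using hmem
  obtain ⟨z, hz, -⟩ := hensels_lemma hlt
  have hz8 : z ^ 8 = 16 := by
    rw [hF] at hz
    simp at hz
    exact sub_eq_zero.1 hz
  refine ⟨PadicInt.toZModPow k z, ?_⟩
  rw [← map_pow, hz8, map_ofNat]

lemma odd_case (B : ℕ) : Odd B → ∃ x : ZMod B, x ^ 8 = 16 := by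
  induction B using Nat.recOnPosPrimePosCoprime with
  | prime_pow p n hp hn =>
      intro hB
      have hFp : Fact p.Prime := ⟨hp⟩
      have hp2 : p ≠ 2 := by
        intro h; subst h
        exact (Nat.not_odd_iff_even.2 (Nat.even_pow.2 ⟨even_two, hn.ne'⟩)) hB
      exact prime_pow_case p hp2 n
  | zero => intro hB; exact absurd hB (by simp)
  | one => intro _; exact ⟨0, Subsingleton.elim _ _⟩
  | coprime m n hm hn hco ihm ihn =>
      intro hB
      have hB' : Odd m ∧ Odd n := by
        rw [Nat.odd_mul] at hB; exact hB
      obtain ⟨x1, hx1⟩ := ihm hB'.1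
      obtain ⟨x2, hx2⟩ := ihn hB'.2
      have e := ZMod.chineseRemainder hco
      refine ⟨e.symm (x1, x2), ?_⟩
      apply e.injective
      rw [map_pow, e.apply_symm_apply]
      have h16 : e 16 = ((16 : ZMod m), (16 : ZMod n)) := by
        have := map_ofNat e.toRingHom 16
        simpa [Prod.ext_iff] using this
      rw [h16, Prod.pow_def, hx1, hx2]

/-- Nat version: for odd B and any N there is X ≥ N with X^8 ≡ 16 mod B. -/
lemma exists_large_eighth_root (B : ℕ) (hB : Odd B) (N : ℕ) :
    ∃ X : ℕ, N ≤ X ∧ X ^ 8 ≡ 16 [MOD B] := by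
  have hB0 : 0 < B := hB.pos
  obtain ⟨x, hx⟩ := odd_case B hB
  have : NeZero B := ⟨hB0.ne'⟩
  refine ⟨x.val + B * N, by nlinarith [x.val.zero_le], ?_⟩
  have h1 : (x.val + B * N) ≡ x.val [MOD B] := by
    show _ % _ = _ % _
    exact Nat.add_mul_mod_self_left x.val B N
  have h2 : x.val ^ 8 ≡ 16 [MOD B] := by
    have : ((x.val ^ 8 : ℕ) : ZMod B) = ((16 : ℕ) : ZMod B) := by
      push_cast
      rw [ZMod.natCast_zmod_val, hx]
    exact (ZMod.natCast_eq_natCast_iff _ _ _).1 this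
  exact (h1.pow 8).trans h2


theorem eighth_powers_not_closed :
    ¬ IsClosed {y : ℕ+ | ∃ x : ℕ+, y = x ^ 8} ∧
    (16 : ℕ+) ∈ closure {y : ℕ+ | ∃ x : ℕ+, y = x ^ 8} ∧
    (16 : ℕ+) ∉ {y : ℕ+ | ∃ x : ℕ+, y = x ^ 8} := by
  have hco16 : ((16 : ℕ+) : ℕ) = 16 := rfl
  have hnotmem : (16 : ℕ+) ∉ {y : ℕ+ | ∃ x : ℕ+, y = x ^ 8} := by
    rintro ⟨x, hx⟩
    have hx' : (16 : ℕ) = (x : ℕ) ^ 8 := by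
      rw [← hco16, hx, PNat.pow_coe]
    have h1 : 1 ≤ (x : ℕ) := x.property
    rcases Nat.lt_or_ge (x : ℕ) 2 with h | h
    · have hx1 : (x : ℕ) = 1 := by omega
      rw [hx1] at hx'
      norm_num at hx'
    · have h2 : 2 ^ 8 ≤ (x : ℕ) ^ 8 := Nat.pow_le_pow_left h 8
      norm_num at h2
      omega
  have hclosure : (16 : ℕ+) ∈ closure {y : ℕ+ | ∃ x : ℕ+, y = x ^ 8} := by
    rw [golomb_isBasis.mem_closure_iff]
    rintro o ⟨a, b, ha, hb, hco, rfl⟩ ⟨n0, hn0⟩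
    rw [hco16] at hn0
    have hcb : Nat.Coprime 16 b := by
      rw [hn0, Nat.coprime_add_mul_left_left]; exact hco
    have hbodd : Odd b := by
      rcases Nat.even_or_odd b with he | ho
      · exfalso
        obtain ⟨c, hc⟩ := he
        have h2 : (2 : ℕ) ∣ Nat.gcd 16 b := Nat.dvd_gcd (by norm_num) (by omega)
        have h1 : Nat.gcd 16 b = 1 := hcb
        omega
      · exact ho
    obtain ⟨X, hX2, hXmod⟩ := exists_large_eighth_root b hbodd 2
    have hX8 : 256 ≤ X ^ 8 := by
      have := Nat.pow_le_pow_left hX2 8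
      norm_num at this
      exact this
    have h16le : (16 : ℕ) ≤ X ^ 8 := by omega
    obtain ⟨c, hc⟩ := (Nat.modEq_iff_dvd' h16le).1 hXmod.symm
    refine ⟨(⟨X, by omega⟩ : ℕ+) ^ 8, ⟨n0 + c, ?_⟩, ⟨⟨X, by omega⟩, rfl⟩⟩
    erw [PNat.pow_coe]
    show X ^ 8 = a + b * (n0 + c)
    have hbc : b * (n0 + c) = b * n0 + b * c := by ring
    omega
  refine ⟨fun hcl => hnotmem (hcl.closure_eq ▸ hclosure), hclosure, hnotmem⟩
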